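/- Let A = ⨁_{a ∈ ℤ/N} A_a be a ℤ/N-graded semisimple algebra over an algebraically closed field of characteristic zero such that A_0 is central in A. Then A_0 is a commutative semisimple algebra, and for every irreducible A_0-module E (necessarily 1-dimensional, with minimal idempotent e_E) and every a ∈ ℤ/N, the A_0-module A_a ⊗_{A_0} E is either zero or isomorphic to E. -/

import Mathlib

open LinearMap Module

section Aux

variable {K A : Type*} [Field K] [CharZero K] [Ring A] [Algebra K A] [FiniteDimensional K A]

/-- The trace of left multiplication by a homogeneous element of nonzero degree vanishes. -/
lemma trace_mulLeft_eq_zero_of_homogeneous {N : ℕ} (𝒜 : ZMod N → Submodule K A)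
    [GradedAlgebra 𝒜] {d : ZMod N} (hd : d ≠ 0) {z : A} (hz : z ∈ 𝒜 d) :
    trace K A (mulLeft K z) = 0 := by
  classical
  have hfin : {c : ZMod N | 𝒜 c ≠ ⊥}.Finite :=
    Submodule.finite_ne_bot_of_iSupIndep
      (DirectSum.Decomposition.isInternal 𝒜).submodule_iSupIndep
  set s : Finset (ZMod N) := hfin.toFinset with hs
  -- the projection onto the `c`-th graded piece
  let π : ∀ c : ZMod N, A →ₗ[K] (𝒜 c) := fun c =>
    { toFun := fun x => DirectSum.decompose 𝒜 x c
      map_add' := fun x y => by simp [DirectSum.decompose_add]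
      map_smul' := fun r x => by
        simp only [RingHom.id_apply]
        show (DirectSum.decompose 𝒜 (r • x)) c = r • (DirectSum.decompose 𝒜 x) c
        rw [DirectSum.decompose_smul]
        rfl }
  have hproj : ∀ x : A, ∑ c ∈ s, ((𝒜 c).subtype ∘ₗ π c) x = x := by
    intro x
    have hsupp : (DirectSum.decompose 𝒜 x).support ⊆ s := by
      intro c hc
      rw [hs, Set.Finite.mem_toFinset]
      intro hbot
      apply DFinsupp.mem_support_iff.mp hc
      have h2 : (DirectSum.decompose 𝒜 x c : A) = 0 :=
        (Submodule.eq_bot_iff _).mp hbot _ (DirectSum.decompose 𝒜 x c).2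
      exact Subtype.ext h2
    calc ∑ c ∈ s, ((𝒜 c).subtype ∘ₗ π c) x
        = ∑ c ∈ (DirectSum.decompose 𝒜 x).support, ((DirectSum.decompose 𝒜 x c : A)) :=
          (Finset.sum_subset hsupp (fun c _ hc => by
            simp [π, DFinsupp.notMem_support_iff.mp hc])).symm
      _ = x := DirectSum.sum_support_decompose 𝒜 x
  have hid : (LinearMap.id : A →ₗ[K] A) = ∑ c ∈ s, ((𝒜 c).subtype ∘ₗ π c) := by
    ext x
    rw [LinearMap.sum_apply, hproj x, LinearMap.id_apply]
  have hcomp : mulLeft K z = ∑ c ∈ s, mulLeft K z ∘ₗ ((𝒜 c).subtype ∘ₗ π c) := by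
    ext x
    have h1 : ∑ c ∈ s, (mulLeft K z ∘ₗ ((𝒜 c).subtype ∘ₗ π c)) x
        = mulLeft K z x := by
      simp only [LinearMap.comp_apply]
      rw [← map_sum]
      congr 1
      simpa only [LinearMap.comp_apply] using hproj x
    rw [LinearMap.sum_apply, h1]
  rw [hcomp, map_sum]
  refine Finset.sum_eq_zero fun c _ => ?_
  have hzero : (π c) ∘ₗ (mulLeft K z ∘ₗ (𝒜 c).subtype) = 0 := by
    ext v
    have hmem : z * (v : A) ∈ 𝒜 (d + c) := SetLike.mul_mem_graded hz v.2
    have hne : d + c ≠ c := fun h => hd (by rwa [add_eq_right] at h)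
    simp only [LinearMap.comp_apply, LinearMap.zero_apply]
    exact DirectSum.decompose_of_mem_ne 𝒜 hmem hne
  have : mulLeft K z ∘ₗ ((𝒜 c).subtype ∘ₗ π c)
      = (mulLeft K z ∘ₗ (𝒜 c).subtype) ∘ₗ π c := by rw [LinearMap.comp_assoc]
  rw [this, LinearMap.trace_comp_comm', hzero, map_zero]

/-- Nondegeneracy of the trace form on a finite-dimensional semisimple algebra in
characteristic zero. -/
lemma eq_zero_of_trace_mulLeft_eq_zero [IsSemisimpleRing A] {x : A}
    (hx : ∀ y : A, trace K A (mulLeft K (x * y)) = 0) : x = 0 := by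
  classical
  let I : Submodule A A :=
    { carrier := {w : A | ∀ y : A, trace K A (mulLeft K (w * y)) = 0}
      add_mem' := by
        intro u v hu hv y
        have h : mulLeft K ((u + v) * y) = mulLeft K (u * y) + mulLeft K (v * y) := by
          ext w; simp [add_mul, mul_assoc]
        rw [h, map_add, hu y, hv y, add_zero]
      zero_mem' := by intro y; simp [zero_mul, mulLeft_zero_eq_zero]
      smul_mem' := by
        intro c w hw y
        have h1 : (c • w) * y = c * (w * y) := by rw [smul_eq_mul, mul_assoc]
        rw [h1, mulLeft_mul, ← Module.End.mul_eq_comp, LinearMap.trace_mul_comm,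
          Module.End.mul_eq_comp, ← mulLeft_mul, mul_assoc]
        exact hw (y * c) }
  obtain ⟨J, hJ⟩ := exists_isCompl I
  have h1 : (1 : A) ∈ I ⊔ J := by rw [hJ.sup_eq_top]; trivial
  obtain ⟨u, hu, v, hv, huv⟩ := Submodule.mem_sup.mp h1
  have key : ∀ w ∈ I, w = w * u := by
    intro w hw
    have hsum : w * u + w * v = w := by rw [← mul_add, huv, mul_one]
    have hwu : w * u ∈ I := by have := I.smul_mem w hu; rwa [smul_eq_mul] at this
    have hwv : w * v ∈ J := by have := J.smul_mem w hv; rwa [smul_eq_mul] at this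
    have h2 : w * v = w - w * u := eq_sub_of_add_eq' hsum
    have h3 : w * v ∈ I := by rw [h2]; exact I.sub_mem hw hwu
    have h4 : w * v ∈ (I ⊓ J : Submodule A A) := ⟨h3, hwv⟩
    rw [hJ.inf_eq_bot, Submodule.mem_bot] at h4
    rw [h4, add_zero] at hsum
    exact hsum.symm
  have hue : u * u = u := (key u hu).symm
  have hu' : ∀ y : A, trace K A (mulLeft K (u * y)) = 0 := hu
  have htru : trace K A (mulLeft K u) = 0 := by
    have := hu' 1; rwa [mul_one] at this
  have hproj : LinearMap.IsProj (range (mulLeft K u)) (mulLeft K u) := by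
    constructor
    · intro w; exact mem_range_self _ w
    · rintro w ⟨w', rfl⟩
      show u * (u * w') = u * w'
      rw [← mul_assoc, hue]
  have h3 : ((finrank K (range (mulLeft K u)) : K)) = 0 := by rw [← hproj.trace, htru]
  have h4 : finrank K (range (mulLeft K u)) = 0 := Nat.cast_eq_zero.mp h3
  have h5 : range (mulLeft K u) = ⊥ := Submodule.finrank_eq_zero.mp h4
  have hu0 : u = 0 := by
    have hmem : mulLeft K u 1 ∈ range (mulLeft K u) := mem_range_self _ 1
    rw [h5, Submodule.mem_bot] at hmem
    simpa using hmem
  have := key x hx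
  rwa [hu0, mul_zero] at this

end Aux

/-- Let `A = ⨁_{a ∈ ℤ/N} A_a` be a `ℤ/N`-graded semisimple algebra over an
algebraically closed field `K` of characteristic zero with `A_0` central in `A`. Then `A_0` is
commutative, and for every irreducible `A_0`-module `E` (necessarily one-dimensional, cut out
by a minimal idempotent `e` with character `ρ`, so that `E ≅ A_0·e` and
`A_a ⊗_{A_0} E ≅ A_a·e`), the `A_0`-module `A_a·e` is either zero, or is one-dimensional with
`A_0` acting through the character `ρ`, i.e. isomorphic to `E`. -/
theorem stmt4 {K A : Type*} [Field K] [IsAlgClosed K] [CharZero K]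
    [Ring A] [Algebra K A] [FiniteDimensional K A] [IsSemisimpleRing A]
    {N : ℕ} (𝒜 : ZMod N → Submodule K A) [GradedAlgebra 𝒜]
    (hcentral : ∀ x ∈ 𝒜 0, ∀ y : A, x * y = y * x)
    (e : A) (he : e ∈ 𝒜 0) (hidem : IsIdempotentElem e) (hne : e ≠ 0)
    (ρ : A → K) (hρ : ∀ c ∈ 𝒜 0, c * e = ρ c • e) :
    (∀ x ∈ 𝒜 0, ∀ y ∈ 𝒜 0, x * y = y * x) ∧
    ∀ a : ZMod N,
      (𝒜 a).map (LinearMap.mulRight K e) = ⊥ ∨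
      (Module.finrank K ((𝒜 a).map (LinearMap.mulRight K e)) = 1 ∧
        ∀ c ∈ 𝒜 0, ∀ v ∈ (𝒜 a).map (LinearMap.mulRight K e), c * v = ρ c • v) := by
  classical
  have he_comm : ∀ y : A, e * y = y * e := hcentral e he
  refine ⟨fun x hx y _ => hcentral x hx y, fun a => ?_⟩
  by_cases hS : (𝒜 a).map (LinearMap.mulRight K e) = ⊥
  · exact Or.inl hS
  right
  have haction : ∀ c ∈ 𝒜 0, ∀ v ∈ (𝒜 a).map (LinearMap.mulRight K e), c * v = ρ c • v := by
    rintro c hc v ⟨w, hw, rfl⟩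
    simp only [LinearMap.mulRight_apply]
    calc c * (w * e) = (w * e) * c := hcentral c hc (w * e)
      _ = w * (e * c) := by rw [mul_assoc]
      _ = w * (c * e) := by rw [← he_comm c]
      _ = w * (ρ c • e) := by rw [hρ c hc]
      _ = ρ c • (w * e) := by rw [mul_smul_comm]
  refine ⟨?_, haction⟩
  -- pick a nonzero element `x = w * e` of the image
  obtain ⟨x, hxS, hx0⟩ := Submodule.exists_mem_ne_zero_of_ne_bot hS
  obtain ⟨w, hw, rfl⟩ := hxS
  set x := LinearMap.mulRight K e w with hxdef
  have hxw : x = w * e := by rw [hxdef, LinearMap.mulRight_apply]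
  have hxa : x ∈ 𝒜 a := by
    have := SetLike.mul_mem_graded hw he
    rwa [add_zero, ← hxw] at this
  have hxe : x * e = x := by rw [hxw, mul_assoc, hidem]
  -- find `y` with nonvanishing trace pairing against `x`
  have hy : ∃ y : A, trace K A (mulLeft K (x * y)) ≠ 0 := by
    by_contra h
    push_neg at h
    exact hx0 (eq_zero_of_trace_mulLeft_eq_zero h)
  obtain ⟨y₀, hy₀⟩ := hy
  -- decompose y₀ and find a homogeneous piece with nonzero pairing
  have hsum : ∑ b ∈ (DirectSum.decompose 𝒜 y₀).support, ((DirectSum.decompose 𝒜 y₀ b : A)) = y₀ :=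
    DirectSum.sum_support_decompose 𝒜 y₀
  have htr : ∑ b ∈ (DirectSum.decompose 𝒜 y₀).support,
      trace K A (mulLeft K (x * (DirectSum.decompose 𝒜 y₀ b : A))) ≠ 0 := by
    have hmul : x * y₀ = ∑ b ∈ (DirectSum.decompose 𝒜 y₀).support,
        x * (DirectSum.decompose 𝒜 y₀ b : A) := by rw [← Finset.mul_sum, hsum]
    have hml : mulLeft K (x * y₀) = ∑ b ∈ (DirectSum.decompose 𝒜 y₀).support,
        mulLeft K (x * (DirectSum.decompose 𝒜 y₀ b : A)) := by
      rw [hmul]; ext w'; simp [Finset.sum_mul, mul_assoc]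
    rwa [hml, map_sum] at hy₀
  obtain ⟨b, _, hb⟩ := Finset.exists_ne_zero_of_sum_ne_zero htr
  set y : A := (DirectSum.decompose 𝒜 y₀ b : A) with hydef
  have hyb : y ∈ 𝒜 b := (DirectSum.decompose 𝒜 y₀ b).2
  -- the degree must cancel
  have hab : a + b = 0 := by
    by_contra hab
    exact hb (trace_mulLeft_eq_zero_of_homogeneous 𝒜 hab (SetLike.mul_mem_graded hxa hyb))
  have hba : b + a = 0 := by rwa [add_comm]
  -- `x * y` is a nonzero multiple of `e`
  have hxy0 : x * y ∈ 𝒜 0 := by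
    have := SetLike.mul_mem_graded hxa hyb; rwa [hab] at this
  have hxye : (x * y) * e = x * y := by
    rw [mul_assoc, ← he_comm y, ← mul_assoc, hxe]
  have hxyρ : x * y = ρ (x * y) • e := by
    have h := hρ (x * y) hxy0
    rwa [hxye] at h
  have hlam : ρ (x * y) ≠ 0 := by
    intro h
    apply hb
    rw [show x * y = 0 by rw [hxyρ, h, zero_smul], mulLeft_zero_eq_zero, map_zero]
  -- the image is the span of x
  have hspan : (𝒜 a).map (LinearMap.mulRight K e) = Submodule.span K {x} := by
    apply le_antisymm
    · rintro v ⟨w', hw', rfl⟩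
      have hx'w : LinearMap.mulRight K e w' = w' * e := LinearMap.mulRight_apply ..
      set x' := w' * e with hx'def
      have hx'a : x' ∈ 𝒜 a := by
        have := SetLike.mul_mem_graded hw' he; rwa [add_zero] at this
      have hx'e : x' * e = x' := by rw [hx'def, mul_assoc, hidem]
      have hyx'0 : y * x' ∈ 𝒜 0 := by
        have := SetLike.mul_mem_graded hyb hx'a; rwa [hba] at this
      have hyx'e : (y * x') * e = y * x' := by rw [mul_assoc, hx'e]
      have hyx'ρ : y * x' = ρ (y * x') • e := by
        have h := hρ (y * x') hyx'0
        rwa [hyx'e] at h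
      have hmain : ρ (x * y) • x' = ρ (y * x') • x := by
        calc ρ (x * y) • x' = (ρ (x * y) • e) * x' := by
              rw [smul_mul_assoc, he_comm x', hx'e]
          _ = (x * y) * x' := by rw [← hxyρ]
          _ = x * (y * x') := by rw [mul_assoc]
          _ = x * (ρ (y * x') • e) := by rw [← hyx'ρ]
          _ = ρ (y * x') • (x * e) := by rw [mul_smul_comm]
          _ = ρ (y * x') • x := by rw [hxe]
      have : x' = ((ρ (x * y))⁻¹ * ρ (y * x')) • x := by
        rw [mul_smul, ← hmain, ← mul_smul, inv_mul_cancel₀ hlam, one_smul]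
      rw [hx'w, this]
      exact Submodule.smul_mem _ _ (Submodule.mem_span_singleton_self x)
    · rw [Submodule.span_singleton_le_iff_mem]
      exact ⟨w, hw, rfl⟩
  rw [hspan]
  exact finrank_span_singleton hx0
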